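/- arXiv:1510.01908 — 2 statements merged into one kernel-verified Lean document; each statement's English description precedes it below -/
import Mathlib

section
/- Let G be a compact group acting on a set M and q ∈ M. If p ∈ Fix(G_q) has the same stabilizer as q (i.e. G_p = G_q), then the intersection of the orbit G·p with Fix(G_q) equals the orbit N(G_q)·p of p under the normalizer of G_q. -/
open Filter

/-- In a compact topological group, if conjugation by `g⁻¹` maps a closed subgroup `H`
into itself, then so does conjugation by `g`. -/
lemma conj_mem_of_inv_conj_mem {G : Type*} [Group G] [TopologicalSpace G] [IsTopologicalGroup G]
    [CompactSpace G] {H : Subgroup G} (hH : IsClosed (H : Set G)) {g : G}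
    (h : ∀ x ∈ H, g⁻¹ * x * g ∈ H) : ∀ x ∈ H, g * x * g⁻¹ ∈ H := by
  intro x hx
  have hn : ∀ n : ℕ, (g ^ n)⁻¹ * x * g ^ n ∈ H := by
    intro n
    induction n with
    | zero => simpa using hx
    | succ n ih =>
      have := h _ ih
      rw [pow_succ, mul_inv_rev]
      convert this using 1
      group
  have hc : MapClusterPt g⁻¹ atTop (g ^ · : ℕ → G) := by
    simpa using mapClusterPt_self_zpow_atTop_pow g (-1)
  have hf : ContinuousAt (fun y : G => y⁻¹ * x * y) g⁻¹ := by fun_prop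
  have hc2 : MapClusterPt (g⁻¹⁻¹ * x * g⁻¹) atTop
      ((fun y : G => y⁻¹ * x * y) ∘ (g ^ · : ℕ → G)) := hc.continuousAt_comp hf
  have hle : Filter.map ((fun y : G => y⁻¹ * x * y) ∘ (g ^ · : ℕ → G)) atTop
      ≤ Filter.principal (H : Set G) := by
    rw [Filter.le_principal_iff]
    exact Filter.mem_map.2 (Filter.Eventually.of_forall hn)
  have : (g⁻¹⁻¹ * x * g⁻¹) ∈ closure (H : Set G) := by
    rw [mem_closure_iff_clusterPt]
    exact hc2.clusterPt.mono hle
  rw [hH.closure_eq] at this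
  simpa using this

/-- For a compact group `G` acting on a Hausdorff space `M`, `q ∈ M` and
`p ∈ Fix(G_q)` with `G_p = G_q`, the intersection of the orbit `G·p` with `Fix(G_q)`
equals the orbit of `p` under the normalizer `N(G_q)`. -/
theorem orbit_inter_fix_eq_normalizer_orbit
    {G M : Type*} [Group G] [TopologicalSpace G] [IsTopologicalGroup G] [CompactSpace G]
    [TopologicalSpace M] [T2Space M] [MulAction G M] [ContinuousSMul G M]
    (q p : M)
    (hp : ∀ h ∈ MulAction.stabilizer G q, h • p = p)
    (hst : MulAction.stabilizer G p = MulAction.stabilizer G q) :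
    MulAction.orbit G p ∩ {x : M | ∀ h ∈ MulAction.stabilizer G q, h • x = x}
      = (fun g : G => g • p) '' (Subgroup.normalizer (MulAction.stabilizer G q : Set G) : Set G) := by
  have hclosed : IsClosed ((MulAction.stabilizer G q : Subgroup G) : Set G) := by
    have : ((MulAction.stabilizer G q : Subgroup G) : Set G)
        = (fun g : G => g • q) ⁻¹' {q} := by
      ext g; simp [MulAction.mem_stabilizer_iff]
    rw [this]
    exact (isClosed_singleton).preimage (continuous_id.smul continuous_const)
  ext x
  constructor
  · rintro ⟨⟨g, rfl⟩, hfix⟩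
    refine ⟨g, ?_, rfl⟩
    -- `g⁻¹ h g ∈ G_q` for `h ∈ G_q`
    have hdir : ∀ h ∈ MulAction.stabilizer G q, g⁻¹ * h * g ∈ MulAction.stabilizer G q := by
      intro h hh
      rw [← hst, MulAction.mem_stabilizer_iff]
      have := hfix h hh
      simp only [mul_smul]
      rw [show h • g • p = g • p from this]
      simp
    have hdir2 := conj_mem_of_inv_conj_mem hclosed hdir
    rw [SetLike.mem_coe, Subgroup.mem_normalizer_iff]
    intro h
    constructor
    · intro hh
      exact hdir2 h hh
    · intro hh
      have := hdir _ hh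
      simpa [mul_assoc] using this
  · rintro ⟨g, hg, rfl⟩
    refine ⟨⟨g, rfl⟩, ?_⟩
    intro h hh
    have h1 : g⁻¹ * h * g ∈ MulAction.stabilizer G q := by
      rw [SetLike.mem_coe, Subgroup.mem_normalizer_iff] at hg
      exact (hg (g⁻¹ * h * g)).mpr (by simpa [mul_assoc] using hh)
    have := hp _ h1
    calc h • g • p = g • ((g⁻¹ * h * g) • p) := by simp [mul_smul]
    _ = g • p := by rw [this]
end

section
/- Let A be a geodesic metric space and C ⊆ A closed. Then C is convex (every pair of points of C is joined by some minimal geodesic of A contained in C) if and only if the metric on C induced from A is intrinsic (i.e. the induced length metric on C equals the restricted metric) and every geodesic of (C, induced metric) is also a geodesic of A. -/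
open Set

/-- The induced intrinsic (length) metric on a subset `C` of a metric space: the infimum
of lengths (total variations) of continuous paths in `C` joining the two points. -/
noncomputable def inducedLengthDist {A : Type*} [MetricSpace A] (C : Set A) (x y : A) :
    ENNReal :=
  ⨅ (γ : ℝ → A) (_ : ContinuousOn γ (Icc 0 1)) (_ : MapsTo γ (Icc 0 1) C)
    (_ : γ 0 = x) (_ : γ 1 = y), eVariationOn γ (Icc 0 1)

/-- `γ` (on `[0,1]`) is a minimal geodesic of `A` lying in `C`, parametrized
proportionally to arc length. -/
def IsMinGeodesicIn {A : Type*} [MetricSpace A] (C : Set A) (γ : ℝ → A) : Prop :=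
  MapsTo γ (Icc 0 1) C ∧
    ∀ s ∈ Icc (0:ℝ) 1, ∀ t ∈ Icc (0:ℝ) 1,
      dist (γ s) (γ t) = |s - t| * dist (γ 0) (γ 1)

/-- `γ` (on `[0,1]`) is a minimal geodesic of `C` equipped with the induced intrinsic
metric. -/
def IsMinGeodesicOfInduced {A : Type*} [MetricSpace A] (C : Set A) (γ : ℝ → A) : Prop :=
  MapsTo γ (Icc 0 1) C ∧
    ∀ s ∈ Icc (0:ℝ) 1, ∀ t ∈ Icc (0:ℝ) 1,
      inducedLengthDist C (γ s) (γ t)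
        = ENNReal.ofReal |s - t| * inducedLengthDist C (γ 0) (γ 1)

section AuxGeo

open Filter Topology

def dyadicSeq {A : Type*} (mid : A → A → A) (x y : A) : ℕ → ℕ → A
  | 0, k => if k = 0 then x else y
  | n+1, k =>
    if k % 2 = 0 then dyadicSeq mid x y n (k / 2)
    else mid (dyadicSeq mid x y n (k / 2)) (dyadicSeq mid x y n (k / 2 + 1))


variable {A : Type*} [MetricSpace A] {C : Set A}

lemma zero_mem_Icc01 : (0:ℝ) ∈ Icc (0:ℝ) 1 := ⟨le_refl 0, zero_le_one⟩
lemma one_mem_Icc01 : (1:ℝ) ∈ Icc (0:ℝ) 1 := ⟨zero_le_one, le_refl 1⟩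

lemma inducedLengthDist_ge (C : Set A) (x y : A) :
    ENNReal.ofReal (dist x y) ≤ inducedLengthDist C x y := by
  refine le_iInf fun γ => le_iInf fun hc => le_iInf fun hm => le_iInf fun h0 =>
    le_iInf fun h1 => ?_
  rw [← h0, ← h1, ← edist_dist]
  exact eVariationOn.edist_le γ zero_mem_Icc01 one_mem_Icc01

lemma geodesic_lipschitz {γ : ℝ → A}
    (h : ∀ s ∈ Icc (0:ℝ) 1, ∀ t ∈ Icc (0:ℝ) 1,
      dist (γ s) (γ t) = |s - t| * dist (γ 0) (γ 1)) :
    LipschitzOnWith (dist (γ 0) (γ 1)).toNNReal γ (Icc 0 1) := by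
  intro s hs t ht
  rw [edist_dist, edist_dist, h s hs t ht, Real.dist_eq]
  have : ((dist (γ 0) (γ 1)).toNNReal : ENNReal) = ENNReal.ofReal (dist (γ 0) (γ 1)) := rfl
  rw [this, ← ENNReal.ofReal_mul dist_nonneg, mul_comm]

lemma geodesic_eVariationOn_le {γ : ℝ → A}
    (h : ∀ s ∈ Icc (0:ℝ) 1, ∀ t ∈ Icc (0:ℝ) 1,
      dist (γ s) (γ t) = |s - t| * dist (γ 0) (γ 1)) :
    eVariationOn γ (Icc 0 1) ≤ ENNReal.ofReal (dist (γ 0) (γ 1)) := by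
  have hl := geodesic_lipschitz h
  have h2 : eVariationOn (γ ∘ id) (Icc (0:ℝ) 1)
      ≤ ((dist (γ 0) (γ 1)).toNNReal : ENNReal) * eVariationOn id (Icc (0:ℝ) 1) :=
    hl.comp_eVariationOn_le (mapsTo_id _)
  have hid : eVariationOn (id : ℝ → ℝ) (Icc (0:ℝ) 1) ≤ ENNReal.ofReal 1 := by
    have := (monotoneOn_id (s := Icc (0:ℝ) 1)).eVariationOn_le zero_mem_Icc01 one_mem_Icc01
    simpa using this
  calc eVariationOn γ (Icc (0:ℝ) 1) = eVariationOn (γ ∘ id) (Icc (0:ℝ) 1) := rfl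
    _ ≤ ((dist (γ 0) (γ 1)).toNNReal : ENNReal) * eVariationOn id (Icc (0:ℝ) 1) := h2
    _ ≤ ENNReal.ofReal (dist (γ 0) (γ 1)) * ENNReal.ofReal 1 := by
        exact mul_le_mul_right hid _
    _ = ENNReal.ofReal (dist (γ 0) (γ 1)) := by simp

lemma exists_approx_midpoint {x y : A}
    (hxy : inducedLengthDist C x y = ENNReal.ofReal (dist x y))
    {ε : ℝ} (hε : 0 < ε) :
    ∃ m ∈ C, dist x m ≤ (dist x y + ε) / 2 ∧ dist m y ≤ (dist x y + ε) / 2 := by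
  have hlt : inducedLengthDist C x y < ENNReal.ofReal (dist x y + ε) := by
    rw [hxy]
    exact ENNReal.ofReal_lt_ofReal_iff (by positivity) |>.2 (by linarith)
  simp only [inducedLengthDist, iInf_lt_iff] at hlt
  obtain ⟨γ, hc, hm, h0, h1, hvar⟩ := hlt
  -- intermediate value
  have hg : ContinuousOn (fun t => dist x (γ t) - dist y (γ t)) (Icc 0 1) :=
    ((continuous_dist.comp (Continuous.prodMk continuous_const continuous_id)).comp_continuousOn hc).sub
      ((continuous_dist.comp (Continuous.prodMk continuous_const continuous_id)).comp_continuousOn hc)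
  have hIVT := intermediate_value_Icc (zero_le_one (α := ℝ)) hg
  have h00 : (fun t => dist x (γ t) - dist y (γ t)) 0 = -dist x y := by
    simp [h0, dist_comm]
  have h11 : (fun t => dist x (γ t) - dist y (γ t)) 1 = dist x y := by
    simp [h1]
  have hmem : (0:ℝ) ∈ Icc ((fun t => dist x (γ t) - dist y (γ t)) 0)
      ((fun t => dist x (γ t) - dist y (γ t)) 1) := by
    rw [h00, h11]; constructor <;> [simp [dist_nonneg]; exact dist_nonneg]
  obtain ⟨t, ht, hteq⟩ := hIVT hmem
  simp only [sub_eq_zero] at hteq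
  refine ⟨γ t, hm ht, ?_, ?_⟩
  · -- dist x (γ t) bounded by half of total variation
    have e1 : edist (γ 0) (γ t) ≤ eVariationOn γ (Icc 0 1 ∩ Icc 0 t) :=
      eVariationOn.edist_le γ ⟨⟨le_refl 0, zero_le_one⟩, le_refl 0, ht.1⟩ ⟨ht, ht.1, le_refl t⟩
    have e2 : edist (γ t) (γ 1) ≤ eVariationOn γ (Icc 0 1 ∩ Icc t 1) :=
      eVariationOn.edist_le γ ⟨ht, le_refl t, ht.2⟩ ⟨⟨zero_le_one, le_refl 1⟩, ht.2, le_refl 1⟩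
    have hadd := eVariationOn.Icc_add_Icc γ (s := Icc 0 1) ht.1 ht.2 ht
    have hsum : edist (γ 0) (γ t) + edist (γ t) (γ 1) < ENNReal.ofReal (dist x y + ε) := by
      calc edist (γ 0) (γ t) + edist (γ t) (γ 1)
          ≤ eVariationOn γ (Icc 0 1 ∩ Icc 0 t) + eVariationOn γ (Icc 0 1 ∩ Icc t 1) :=
            add_le_add e1 e2
        _ = eVariationOn γ (Icc 0 1 ∩ Icc 0 1) := hadd
        _ = eVariationOn γ (Icc 0 1) := by rw [inter_self]
        _ < _ := hvar
    rw [h0, h1, edist_dist, edist_dist, ← ENNReal.ofReal_add dist_nonneg dist_nonneg] at hsum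
    have := (ENNReal.ofReal_lt_ofReal_iff (by positivity)).1 hsum
    have h2 : dist x (γ t) = dist (γ t) y := hteq.trans (dist_comm y (γ t))
    linarith [this, h2]
  · have h2 : dist x (γ t) = dist (γ t) y := hteq.trans (dist_comm y (γ t))
    have e1 : edist (γ 0) (γ t) ≤ eVariationOn γ (Icc 0 1 ∩ Icc 0 t) :=
      eVariationOn.edist_le γ ⟨⟨le_refl 0, zero_le_one⟩, le_refl 0, ht.1⟩ ⟨ht, ht.1, le_refl t⟩
    have e2 : edist (γ t) (γ 1) ≤ eVariationOn γ (Icc 0 1 ∩ Icc t 1) :=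
      eVariationOn.edist_le γ ⟨ht, le_refl t, ht.2⟩ ⟨⟨zero_le_one, le_refl 1⟩, ht.2, le_refl 1⟩
    have hadd := eVariationOn.Icc_add_Icc γ (s := Icc 0 1) ht.1 ht.2 ht
    have hsum : edist (γ 0) (γ t) + edist (γ t) (γ 1) < ENNReal.ofReal (dist x y + ε) := by
      calc edist (γ 0) (γ t) + edist (γ t) (γ 1)
          ≤ eVariationOn γ (Icc 0 1 ∩ Icc 0 t) + eVariationOn γ (Icc 0 1 ∩ Icc t 1) :=
            add_le_add e1 e2
        _ = eVariationOn γ (Icc 0 1 ∩ Icc 0 1) := hadd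
        _ = eVariationOn γ (Icc 0 1) := by rw [inter_self]
        _ < _ := hvar
    rw [h0, h1, edist_dist, edist_dist, ← ENNReal.ofReal_add dist_nonneg dist_nonneg] at hsum
    have := (ENNReal.ofReal_lt_ofReal_iff (by positivity)).1 hsum
    linarith [this, h2]

lemma exists_midpoint [ProperSpace A] (hC : IsClosed C)
    {x y : A} (hxy : inducedLengthDist C x y = ENNReal.ofReal (dist x y)) :
    ∃ m ∈ C, dist x m = dist x y / 2 ∧ dist m y = dist x y / 2 := by
  set d := dist x y with hd
  have happrox : ∀ n : ℕ, ∃ m ∈ C, dist x m ≤ (d + 1/(n+1)) / 2 ∧ dist m y ≤ (d + 1/(n+1)) / 2 :=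
    fun n => exists_approx_midpoint hxy (by positivity)
  choose m hmC hm1 hm2 using happrox
  have hK : IsCompact (C ∩ Metric.closedBall x (d/2 + 1)) :=
    (isCompact_closedBall x _).inter_left hC
  have hmem : ∀ n, m n ∈ C ∩ Metric.closedBall x (d/2 + 1) := by
    intro n
    refine ⟨hmC n, ?_⟩
    rw [Metric.mem_closedBall, dist_comm]
    have h1 : (1:ℝ)/(n+1) ≤ 1 := by
      rw [div_le_one (by positivity)]; linarith [Nat.cast_nonneg (α := ℝ) n]
    calc dist x (m n) ≤ (d + 1/(n+1))/2 := hm1 n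
      _ ≤ d/2 + 1 := by linarith
  obtain ⟨z, hz, φ, hφ, hφt⟩ := hK.tendsto_subseq hmem
  have hφatTop : Tendsto φ atTop atTop := hφ.tendsto_atTop
  have t1 : Tendsto (fun n => (1:ℝ)/(φ n + 1)) atTop (𝓝 0) :=
    tendsto_one_div_add_atTop_nhds_zero_nat.comp hφatTop
  have t2 : Tendsto (fun n => dist (m (φ n)) z) atTop (𝓝 0) := by
    have := hφt.dist (tendsto_const_nhds (x := z))
    simpa using this
  have t2' : Tendsto (fun n => dist z (m (φ n))) atTop (𝓝 0) := by
    simpa [dist_comm] using t2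
  have hb1 : Tendsto (fun n => (d + 1/(φ n + 1))/2 + dist (m (φ n)) z) atTop (𝓝 (d/2)) := by
    have := ((tendsto_const_nhds (x := d)).add t1).div_const 2 |>.add t2
    simpa using this
  have hxz : dist x z ≤ d / 2 := by
    refine ge_of_tendsto hb1 (Eventually.of_forall fun n => ?_)
    calc dist x z ≤ dist x (m (φ n)) + dist (m (φ n)) z := dist_triangle _ _ _
      _ ≤ (d + 1/(φ n + 1))/2 + dist (m (φ n)) z := by
          have := hm1 (φ n); gcongr
  have hb2 : Tendsto (fun n => dist z (m (φ n)) + (d + 1/(φ n + 1))/2) atTop (𝓝 (d/2)) := by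
    have := t2'.add (((tendsto_const_nhds (x := d)).add t1).div_const 2)
    simpa using this
  have hzy : dist z y ≤ d / 2 := by
    refine ge_of_tendsto hb2 (Eventually.of_forall fun n => ?_)
    calc dist z y ≤ dist z (m (φ n)) + dist (m (φ n)) y := dist_triangle _ _ _
      _ ≤ dist z (m (φ n)) + (d + 1/(φ n + 1))/2 := by
          have := hm2 (φ n); gcongr
  have htri : d ≤ dist x z + dist z y := dist_triangle x z y
  exact ⟨z, hz.1, by linarith, by linarith⟩

lemma exists_geodesic [ProperSpace A] (hC : IsClosed C)
    (hint : ∀ x ∈ C, ∀ y ∈ C, inducedLengthDist C x y = ENNReal.ofReal (dist x y))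
    {x y : A} (hx : x ∈ C) (hy : y ∈ C) :
    ∃ γ : ℝ → A, IsMinGeodesicIn C γ ∧ γ 0 = x ∧ γ 1 = y := by
  classical
  set d := dist x y with hd
  have hd0 : 0 ≤ d := dist_nonneg
  -- midpoint function
  let mid : A → A → A := fun a b =>
    if h : a ∈ C ∧ b ∈ C then (exists_midpoint hC (hint a h.1 b h.2)).choose else a
  have hmid : ∀ a b, a ∈ C → b ∈ C → mid a b ∈ C ∧
      dist a (mid a b) = dist a b / 2 ∧ dist (mid a b) b = dist a b / 2 := by
    intro a b ha hb
    have h : a ∈ C ∧ b ∈ C := ⟨ha, hb⟩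
    simp only [mid, dif_pos h]
    obtain ⟨hm, h1, h2⟩ := (exists_midpoint hC (hint a h.1 b h.2)).choose_spec
    exact ⟨hm, h1, h2⟩
  set f := dyadicSeq mid x y with hf
  have hfe : ∀ n k, f (n+1) k = if k % 2 = 0 then f n (k / 2)
      else mid (f n (k / 2)) (f n (k / 2 + 1)) := fun n k => rfl
  have hf00 : ∀ k, f 0 k = if k = 0 then x else y := fun k => rfl
  -- basic invariants
  have key : ∀ n, (∀ k ≤ 2^n, f n k ∈ C) ∧
      (∀ k < 2^n, dist (f n k) (f n (k+1)) = d / 2^n) := by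
    intro n
    induction n with
    | zero =>
      constructor
      · intro k hk
        interval_cases k
        · rw [hf00]; simpa using hx
        · rw [hf00]; simpa using hy
      · intro k hk
        interval_cases k
        rw [hf00, hf00]; simpa using hd.symm
    | succ n ih =>
      have hC' := ih.1
      have hD := ih.2
      have memC : ∀ k ≤ 2^(n+1), f (n+1) k ∈ C := by
        intro k hk
        rw [hfe]
        by_cases hpar : k % 2 = 0
        · rw [if_pos hpar]
          exact hC' _ (by omega)
        · rw [if_neg hpar]
          have h1 : k / 2 ≤ 2^n := by omega
          have h2 : k / 2 + 1 ≤ 2^n := by omega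
          exact (hmid _ _ (hC' _ h1) (hC' _ h2)).1
      refine ⟨memC, ?_⟩
      intro k hk
      rcases Nat.even_or_odd k with ⟨j, hj⟩ | ⟨j, hj⟩
      · -- k = 2j : f(n+1) k = f n j, f(n+1) (k+1) = mid (f n j) (f n (j+1))
        subst hj
        have e1 : f (n+1) (j + j) = f n j := by
          rw [hfe]; rw [if_pos (by omega)]; congr 1; omega
        have e2 : f (n+1) (j + j + 1) = mid (f n j) (f n (j+1)) := by
          rw [hfe]; rw [if_neg (by omega)]
          congr 2 <;> omega
        rw [e1, e2]
        have hj2 : j < 2^n := by omega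
        have := (hmid _ _ (hC' j (by omega)) (hC' (j+1) (by omega))).2.1
        rw [this, hD j hj2]
        rw [pow_succ]
        ring
      · -- k = 2j+1
        subst hj
        have e1 : f (n+1) (2*j + 1) = mid (f n j) (f n (j+1)) := by
          rw [hfe]; rw [if_neg (by omega)]
          congr 2 <;> omega
        have e2 : f (n+1) (2*j + 1 + 1) = f n (j+1) := by
          rw [hfe]; rw [if_pos (by omega)]; congr 1; omega
        rw [e1, e2]
        have hj2 : j < 2^n := by omega
        have := (hmid _ _ (hC' j (by omega)) (hC' (j+1) (by omega))).2.2
        rw [this, hD j hj2]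
        rw [pow_succ]
        ring
  -- endpoints
  have hf0 : ∀ n, f n 0 = x := by
    intro n
    induction n with
    | zero => rw [hf00]; simp
    | succ n ih => rw [hfe]; simpa using ih
  have hfN : ∀ n, f n (2^n) = y := by
    intro n
    induction n with
    | zero => rw [hf00]; simp
    | succ n ih =>
      rw [hfe, if_pos (by simp [Nat.pow_succ, Nat.mul_mod_left])]
      have : 2^(n+1) / 2 = 2^n := by
        rw [pow_succ]; omega
      rw [this, ih]
  -- chain upper bound
  have chain : ∀ n k j, j ≤ k → k ≤ 2^n → dist (f n j) (f n k) ≤ ((k:ℝ) - j) * (d / 2^n) := by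
    intro n k
    induction k with
    | zero =>
      intro j hj _
      interval_cases j
      simp
    | succ k ih =>
      intro j hj hk
      rcases Nat.lt_or_ge j (k+1) with h | h
      · have hjk : j ≤ k := by omega
        calc dist (f n j) (f n (k+1))
            ≤ dist (f n j) (f n k) + dist (f n k) (f n (k+1)) := dist_triangle _ _ _
          _ ≤ ((k:ℝ) - j) * (d / 2^n) + d / 2^n :=
              add_le_add (ih j hjk (by omega)) (le_of_eq ((key n).2 k (by omega)))
          _ = (((k:ℕ)+1:ℝ) - j) * (d / 2^n) := by push_cast; ring
          _ = (((k+1:ℕ):ℝ) - j) * (d / 2^n) := by push_cast; ring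
      · have hjeq : j = k+1 := by omega
        subst hjeq
        simp
  -- exact distance
  have exact : ∀ n j k, j ≤ 2^n → k ≤ 2^n →
      dist (f n j) (f n k) = |(j:ℝ) - k| * (d / 2^n) := by
    have base : ∀ n j k, j ≤ k → k ≤ 2^n →
        dist (f n j) (f n k) = ((k:ℝ) - j) * (d / 2^n) := by
      intro n j k hjk hk
      have h1 := chain n k j hjk hk
      have h2 := chain n j 0 (Nat.zero_le _) (le_trans hjk hk)
      have h3 := chain n (2^n) k hk le_rfl
      have htri := dist_triangle4 (f n 0) (f n j) (f n k) (f n (2^n))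
      rw [hf0, hfN] at htri
      rw [hf0] at h2
      rw [hfN] at h3
      have hcast : ((2^n : ℕ) : ℝ) = 2^n := by push_cast; ring
      rw [hcast] at h3
      have hpow : (0:ℝ) < 2^n := by positivity
      have hdid : d = 2^n * (d / 2^n) := by field_simp
      simp only [Nat.cast_zero, sub_zero] at h2
      linarith [h1, h2, h3, htri]
    intro n j k hj hk
    rcases le_total j k with h | h
    · rw [base n j k h hk, abs_of_nonpos (by simp [Nat.cast_le, h] : (j:ℝ) - k ≤ 0)]
      ring
    · rw [dist_comm, base n k j h hj, abs_of_nonneg (by simp [Nat.cast_le, h] : (0:ℝ) ≤ (j:ℝ) - k)]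
  -- approximating sequence
  set g : ℕ → ℝ → A := fun n t => f n ⌊t * 2^n⌋₊ with hg
  have hfloor_le : ∀ t ∈ Icc (0:ℝ) 1, ∀ n : ℕ, ⌊t * 2^n⌋₊ ≤ 2^n := by
    intro t ht n
    have h1 : t * 2^n ≤ ((2^n : ℕ) : ℝ) := by
      push_cast
      nlinarith [ht.2, (by positivity : (0:ℝ) < (2:ℝ)^n)]
    calc ⌊t * 2^n⌋₊ ≤ ⌊((2^n:ℕ):ℝ)⌋₊ := Nat.floor_mono h1
      _ = 2^n := Nat.floor_natCast _
  have hstep : ∀ t ∈ Icc (0:ℝ) 1, ∀ n, dist (g n t) (g (n+1) t) ≤ d / 2^(n+1) := by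
    intro t ht n
    have ht0 : (0:ℝ) ≤ t := ht.1
    set k := ⌊t * 2^n⌋₊ with hk'
    set K := ⌊t * 2^(n+1)⌋₊ with hK'
    have hk : k ≤ 2^n := hfloor_le t ht n
    have hK : K ≤ 2^(n+1) := hfloor_le t ht (n+1)
    have hfl1 : (k:ℝ) ≤ t * 2^n := Nat.floor_le (by positivity)
    have hfl2 : t * 2^n < (k:ℝ) + 1 := Nat.lt_floor_add_one _
    have hp : (2:ℝ)^(n+1) = 2^n * 2 := pow_succ 2 n
    have hlow : 2*k ≤ K := by
      apply Nat.le_floor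
      push_cast
      nlinarith
    have hK2 : K < 2*k+2 := by
      apply (Nat.floor_lt (by positivity)).2
      push_cast
      nlinarith
    have e2 : g n t = f (n+1) (2*k) := by
      show f n k = _
      rw [hfe, if_pos (by omega)]
      congr 1
      omega
    have e1 : g (n+1) t = f (n+1) K := rfl
    rw [e2, e1, exact (n+1) (2*k) K (by omega) hK]
    have habs : |((2*k:ℕ):ℝ) - (K:ℝ)| ≤ 1 := by
      have c1 : ((2*k:ℕ):ℝ) ≤ (K:ℝ) := by exact_mod_cast hlow
      have c2 : (K:ℝ) ≤ ((2*k:ℕ):ℝ) + 1 := by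
        have h3 : K ≤ 2*k + 1 := by omega
        push_cast
        exact_mod_cast h3
      rw [abs_le]
      constructor <;> linarith
    calc |((2*k:ℕ):ℝ) - (K:ℝ)| * (d / 2^(n+1)) ≤ 1 * (d / 2^(n+1)) :=
          mul_le_mul_of_nonneg_right habs (by positivity)
      _ = d / 2^(n+1) := one_mul _
  have hcauchy : ∀ t ∈ Icc (0:ℝ) 1, CauchySeq (fun n => g n t) := by
    intro t ht
    apply cauchySeq_of_le_geometric (1/2 : ℝ) d (by norm_num)
    intro n
    calc dist (g n t) (g (n+1) t) ≤ d / 2^(n+1) := hstep t ht n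
      _ ≤ d / 2^n := by gcongr <;> norm_num
      _ = d * (1/2)^n := by rw [one_div, inv_pow, mul_comm, inv_mul_eq_div]
  have hconv : ∀ t, t ∈ Icc (0:ℝ) 1 → ∃ a, Tendsto (fun n => g n t) atTop (𝓝 a) :=
    fun t ht => cauchySeq_tendsto_of_complete (hcauchy t ht)
  have hne : Nonempty A := ⟨x⟩
  choose! γ hγ using hconv
  have hγ0 : γ 0 = x := by
    have h0 : ∀ n, g n 0 = x := by
      intro n
      show f n ⌊(0:ℝ) * 2^n⌋₊ = x
      rw [zero_mul, Nat.floor_zero, hf0]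
    refine tendsto_nhds_unique (hγ 0 ⟨le_refl 0, zero_le_one⟩) ?_
    simp only [h0]
    exact tendsto_const_nhds
  have hγ1 : γ 1 = y := by
    have h1 : ∀ n, g n 1 = y := by
      intro n
      show f n ⌊(1:ℝ) * 2^n⌋₊ = y
      have he : (1:ℝ) * 2^n = ((2^n : ℕ) : ℝ) := by push_cast; ring
      rw [he, Nat.floor_natCast, hfN]
    refine tendsto_nhds_unique (hγ 1 ⟨zero_le_one, le_refl 1⟩) ?_
    simp only [h1]
    exact tendsto_const_nhds
  have hγC : ∀ t ∈ Icc (0:ℝ) 1, γ t ∈ C := by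
    intro t ht
    refine hC.mem_of_tendsto (hγ t ht) (Eventually.of_forall fun n => ?_)
    exact (key n).1 _ (hfloor_le t ht n)
  have hfl : ∀ t ∈ Icc (0:ℝ) 1, Tendsto (fun n : ℕ => (⌊t * 2^n⌋₊ : ℝ) / 2^n) atTop (𝓝 t) := by
    intro t ht
    have hub : ∀ n : ℕ, (⌊t * 2^n⌋₊ : ℝ) / 2^n ≤ t := by
      intro n
      rw [div_le_iff₀ (by positivity)]
      exact Nat.floor_le (mul_nonneg ht.1 (by positivity))
    have hlb : ∀ n : ℕ, t - (1/2)^n ≤ (⌊t * 2^n⌋₊ : ℝ) / 2^n := by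
      intro n
      rw [le_div_iff₀ (by positivity)]
      have hone : ((1:ℝ)/2)^n * 2^n = 1 := by
        rw [← mul_pow]
        norm_num
      have h := Nat.lt_floor_add_one (t * 2^n)
      have hexp : (t - (1/2)^n) * 2^n = t * 2^n - 1 := by
        rw [sub_mul, hone]
      rw [hexp]
      linarith
    have hlowt : Tendsto (fun n : ℕ => t - (1/2:ℝ)^n) atTop (𝓝 t) := by
      have := tendsto_const_nhds (x := t) (f := atTop (α := ℕ)) |>.sub
        (tendsto_pow_atTop_nhds_zero_of_lt_one (by norm_num) (by norm_num : (1/2:ℝ) < 1))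
      simpa using this
    exact tendsto_of_tendsto_of_tendsto_of_le_of_le hlowt tendsto_const_nhds hlb hub
  have hdistf : ∀ s ∈ Icc (0:ℝ) 1, ∀ t ∈ Icc (0:ℝ) 1,
      dist (γ s) (γ t) = |s - t| * d := by
    intro s hs t ht
    have h1 : Tendsto (fun n => dist (g n s) (g n t)) atTop (𝓝 (dist (γ s) (γ t))) :=
      (hγ s hs).dist (hγ t ht)
    have h2 : ∀ n, dist (g n s) (g n t)
        = |(⌊s*2^n⌋₊:ℝ)/2^n - (⌊t*2^n⌋₊:ℝ)/2^n| * d := by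
      intro n
      have he : dist (g n s) (g n t)
          = |(⌊s*2^n⌋₊:ℝ) - (⌊t*2^n⌋₊:ℝ)| * (d / 2^n) :=
        exact n _ _ (hfloor_le s hs n) (hfloor_le t ht n)
      rw [he, div_sub_div_same, abs_div, abs_of_pos (by positivity : (0:ℝ) < (2:ℝ)^n)]
      ring
    have h3 : Tendsto (fun n : ℕ => |(⌊s*2^n⌋₊:ℝ)/2^n - (⌊t*2^n⌋₊:ℝ)/2^n| * d) atTop
        (𝓝 (|s - t| * d)) :=
      (((hfl s hs).sub (hfl t ht)).abs).mul_const d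
    simp only [h2] at h1
    exact tendsto_nhds_unique h1 h3
  refine ⟨γ, ⟨fun t ht => hγC t ht, ?_⟩, hγ0, hγ1⟩
  intro s hs t ht
  rw [hdistf s hs t ht, hγ0, hγ1]

end AuxGeo

/-- In a complete, locally compact (proper) geodesic metric space `A`, a closed subset
`C` is convex (every pair of points of `C` is joined by a minimal geodesic of `A` inside
`C`) iff the metric induced on `C` is intrinsic (the induced length metric equals the
restricted metric) and every geodesic of `(C, induced metric)` is a geodesic of `A`. -/
theorem convex_iff_intrinsic_and_geodesics_agree
    {A : Type*} [MetricSpace A] [ProperSpace A]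
    (hgeo : ∀ x y : A, ∃ γ : ℝ → A, IsMinGeodesicIn (univ : Set A) γ ∧ γ 0 = x ∧ γ 1 = y)
    (C : Set A) (hC : IsClosed C) :
    (∀ x ∈ C, ∀ y ∈ C, ∃ γ : ℝ → A, IsMinGeodesicIn C γ ∧ γ 0 = x ∧ γ 1 = y)
      ↔ ((∀ x ∈ C, ∀ y ∈ C, inducedLengthDist C x y = ENNReal.ofReal (dist x y)) ∧
         (∀ γ : ℝ → A, IsMinGeodesicOfInduced C γ → IsMinGeodesicIn (univ : Set A) γ)) := by
  constructor
  · intro h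
    have hint : ∀ x ∈ C, ∀ y ∈ C, inducedLengthDist C x y = ENNReal.ofReal (dist x y) := by
      intro x hx y hy
      obtain ⟨γ, ⟨hmaps, hgeod⟩, h0, h1⟩ := h x hx y hy
      refine le_antisymm ?_ (inducedLengthDist_ge C x y)
      have hcont : ContinuousOn γ (Icc 0 1) := (geodesic_lipschitz hgeod).continuousOn
      refine le_trans (iInf_le_of_le γ (iInf_le_of_le hcont (iInf_le_of_le hmaps
        (iInf_le_of_le h0 (iInf_le _ h1))))) ?_
      rw [← h0, ← h1]
      exact geodesic_eVariationOn_le hgeod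
    refine ⟨hint, ?_⟩
    rintro γ ⟨hmaps, hind⟩
    refine ⟨mapsTo_univ _ _, ?_⟩
    intro s hs t ht
    have h0m : (0:ℝ) ∈ Icc (0:ℝ) 1 := zero_mem_Icc01
    have h1m : (1:ℝ) ∈ Icc (0:ℝ) 1 := one_mem_Icc01
    have e := hind s hs t ht
    rw [hint (γ s) (hmaps hs) (γ t) (hmaps ht),
        hint (γ 0) (hmaps h0m) (γ 1) (hmaps h1m),
        ← ENNReal.ofReal_mul (abs_nonneg _)] at e
    exact (ENNReal.ofReal_eq_ofReal_iff dist_nonneg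
      (mul_nonneg (abs_nonneg _) dist_nonneg)).1 e
  · rintro ⟨hint, -⟩ x hx y hy
    exact exists_geodesic hC hint hx hy
end
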